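/- Antisymmetry of the dominator relation: Let A and B be two distinct dominators of a vertex u (with respect to root). If B dominates A, then A does not dominate B. -/

import Mathlib

/-- A nonempty directed path `p` from `a` to `b` in the graph with edge relation `E`. -/
def IsPath {V : Type*} (E : V → V → Prop) (p : List V) (a b : V) : Prop :=
  p ≠ [] ∧ p.head? = some a ∧ p.getLast? = some b ∧ p.Chain' E

/-- `A` dominates `B` with respect to `root`: every path from a vertex of `B` to `root`
contains a vertex of `A`. -/
def Dominates {V : Type*} (E : V → V → Prop) (root : V) (A B : Set V) : Prop :=
  ∀ b ∈ B, ∀ p : List V, IsPath E p b root → ∃ a ∈ A, a ∈ p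

/-- `A` is a dominator of `B`: it dominates `B` and no proper subset `A \ {v}` does. -/
def IsDominator {V : Type*} (E : V → V → Prop) (root : V) (A B : Set V) : Prop :=
  Dominates E root A B ∧ ∀ v ∈ A, ¬ Dominates E root (A \ {v}) B

/-- `{v, w}` is a double-vertex dominator of `u`. -/
def DoubleDom {V : Type*} (E : V → V → Prop) (root : V) (u v w : V) : Prop :=
  v ≠ w ∧ Dominates E root {v, w} {u} ∧
    ¬ Dominates E root {v} {u} ∧ ¬ Dominates E root {w} {u}

/-- The edge relation `E` is acyclic. -/
def Acyclic {V : Type*} (E : V → V → Prop) : Prop :=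
  ∀ a b, E a b → ¬ Relation.ReflTransGen E b a

lemma chain'_rtg {V : Type*} {E : V → V → Prop} {p : List V} (hc : p.Chain' E)
    {i j : ℕ} (hij : i ≤ j) (hj : j < p.length) :
    Relation.ReflTransGen E p[i] p[j] := by
  induction j, hij using Nat.le_induction with
  | base => exact Relation.ReflTransGen.refl
  | succ j hij ih =>
    have h := List.isChain_iff_getElem.mp hc j (by omega)
    exact (ih (by omega)).tail h

lemma nodup_of_acyclic {V : Type*} {E : V → V → Prop} (hacyc : Acyclic E)
    {p : List V} (hc : p.Chain' E) : p.Nodup := by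
  have key : ∀ i j, ∀ _ : i < j, ∀ _ : j < p.length, p[i] ≠ p[j] := by
    intro i j hij hj heq
    have h1 : E p[i] p[i+1] := by
      have h := List.isChain_iff_getElem.mp hc i (by omega)
      simpa using h
    have h2 : Relation.ReflTransGen E p[i+1] p[j] := chain'_rtg hc (by omega) hj
    exact hacyc _ _ h1 (heq ▸ h2)
  rw [List.nodup_iff_injective_getElem]
  rintro ⟨i, hi⟩ ⟨j, hj⟩ h
  simp only at h
  rcases lt_trichotomy i j with hlt | heq | hgt
  · exact absurd h (key i j hlt hj)
  · simp [heq]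
  · exact absurd h.symm (key j i hgt hi)

lemma isPath_drop {V : Type*} {E : V → V → Prop} {root a : V} {p : List V}
    (hp : IsPath E p a root) {n : ℕ} (hn : n < p.length) :
    IsPath E (p.drop n) p[n] root := by
  obtain ⟨hne, hhd, hlast, hc⟩ := hp
  refine ⟨?_, ?_, ?_, hc.drop n⟩
  · simp [List.drop_eq_nil_iff]; omega
  · rw [List.head?_drop, List.getElem?_eq_getElem hn]
  · rw [List.getLast?_drop, if_neg (by omega)]; exact hlast

lemma le_of_mem_drop {V : Type*} {p : List V} (hnd : p.Nodup) {i j : ℕ}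
    (hj : j < p.length) (h : p[j] ∈ p.drop i) : i ≤ j := by
  rw [List.mem_iff_getElem] at h
  obtain ⟨k, hk, hkeq⟩ := h
  rw [List.getElem_drop] at hkeq
  have hik : i + k < p.length := by simp at hk; omega
  have := (hnd.getElem_inj_iff (hi := hik) (hj := hj)).mp hkeq
  omega

lemma dom_subset {V : Type*} {E : V → V → Prop} {root u : V}
    (hacyc : Acyclic E) {A B : Set V}
    (hA : IsDominator E root A {u})
    (hBA : Dominates E root B A) (hABd : Dominates E root A B) : A ⊆ B := by
  intro v hv
  obtain ⟨hAdom, hmin⟩ := hA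
  have hnd := hmin v hv
  rw [Dominates] at hnd; push_neg at hnd
  obtain ⟨b, hb, p, hp, hnohit⟩ := hnd
  -- A hits p only at v
  have honly : ∀ a ∈ A, a ∈ p → a = v := by
    intro a ha hap
    by_contra hne
    exact absurd hap (hnohit a ⟨ha, hne⟩)
  have hnodup : p.Nodup := nodup_of_acyclic hacyc hp.2.2.2
  have hvmem : v ∈ p := by
    obtain ⟨a, ha, hap⟩ := hAdom b hb p hp
    have := honly a ha hap
    rwa [this] at hap
  obtain ⟨i, hi, hieq⟩ := List.mem_iff_getElem.mp hvmem
  -- suffix from v hits B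
  obtain ⟨b', hb', hb'mem⟩ := hBA v hv (p.drop i) (hieq ▸ isPath_drop hp hi)
  obtain ⟨k, hk, hkeq⟩ := List.mem_iff_getElem.mp hb'mem
  rw [List.getElem_drop] at hkeq
  have hik : i + k < p.length := by simp at hk; omega
  -- suffix from b' hits A, necessarily at v
  obtain ⟨a, ha, hamem⟩ := hABd b' hb' (p.drop (i + k)) (hkeq ▸ isPath_drop hp hik)
  have hav : a = v := honly a ha (List.mem_of_mem_drop hamem)
  -- positions force v = b'
  have h1 : i + k ≤ i := by
    apply le_of_mem_drop hnodup hi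
    rw [hieq, ← hav]; exact hamem
  have heq : p[i] = p[i + k] := (hnodup.getElem_inj_iff (hi := hi) (hj := hik)).mpr (by omega)
  rw [hieq, hkeq] at heq
  rw [heq]; exact hb'

theorem dominator_antisymm {V : Type*} [Fintype V] (E : V → V → Prop) (root : V)
    (hacyc : Acyclic E) (u : V) (A B : Set V) (hAB : A ≠ B)
    (hA : IsDominator E root A {u}) (hB : IsDominator E root B {u})
    (hBA : Dominates E root B A) :
    ¬ Dominates E root A B := by
  intro hABd
  exact hAB (le_antisymm (dom_subset hacyc hA hBA hABd) (dom_subset hacyc hB hABd hBA))
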